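/- Suppose R = C(M) + E where C(M) = M·λ_k(β)_a⃗ with M ∈ F^(s×k) and E ∈ F^(s×n) has sum-rank weight t satisfying (s+1)·t < s·(n − k + 1). Let D := ⌈(n + s(k−1) + 1)/(s+1)⌉ and let (Q_0, Q_1, …, Q_s) be a nonzero tuple with Q_0 ∈ F^D and Q_l ∈ F^(D−k+1) for 1 ≤ l ≤ s satisfying the interpolation conditions for R. Then, with f^(l) ∈ F^k the l-th row of M, the skew polynomial P := Q_0 + Σ_(l=1)^s Q_l ∗ f^(l) is identically zero (every coefficient of P vanishes). -/

import Mathlib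

namespace Stmt13

/-- `genNorm σ a i = σ^(i-1)(a) ⋯ σ(a) · a`, the generalized power function `N_i(a)`. -/
def genNorm {F : Type} [Field F] (σ : F ≃+* F) (a : F) : ℕ → F
  | 0 => 1
  | i + 1 => (⇑σ)^[i] a * genNorm σ a i

/-- Generalized operator `D_a^i(b) = σ^i(b) · N_i(a)` for `i ∈ ℕ`. -/
def opev {F : Type} [Field F] (σ : F ≃+* F) (a b : F) (i : ℕ) : F :=
  (⇑σ)^[i] b * genNorm σ a i

/-- `b` is σ-conjugate to `a`, i.e. `b = σ(c)·a·c⁻¹` for some nonzero `c`. -/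
def SConj {F : Type} [Field F] (σ : F ≃+* F) (a b : F) : Prop :=
  ∃ c : F, c ≠ 0 ∧ b = σ c * a * c⁻¹

/-- σ-generalized Moore matrix `λ_d(x)_a⃗` w.r.t. the length partition `nn`:
its row `r` applies `D_{a_i}^r` entrywise to the `i`-th block of `x`. -/
def moore {F : Type} [Field F] (σ : F ≃+* F) {ℓ : ℕ} (nn : Fin ℓ → ℕ) (aa : Fin ℓ → F)
    (d : ℕ) (x : (Σ i : Fin ℓ, Fin (nn i)) → F) :
    Matrix (Fin d) (Σ i : Fin ℓ, Fin (nn i)) F :=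
  Matrix.of fun r p => opev σ (aa p.1) (x p) (r : ℕ)

/-- `λ_d(X)_a⃗` for a matrix `X`: the stack of `λ_d(x_j)_a⃗` over the rows of `X`. -/
def mooreMat {F : Type} [Field F] (σ : F ≃+* F) {ℓ : ℕ} (nn : Fin ℓ → ℕ) (aa : Fin ℓ → F)
    {s : ℕ} (d : ℕ) (X : Matrix (Fin s) (Σ i : Fin ℓ, Fin (nn i)) F) :
    Matrix (Fin s × Fin d) (Σ i : Fin ℓ, Fin (nn i)) F :=
  Matrix.of fun r p => opev σ (aa p.1) (X r.1 p) (r.2 : ℕ)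

/-- `rk_q` of a vector: the `K`-dimension of the `K`-span of its entries. -/
noncomputable def rkq (K : Type) [Field K] {F : Type} [Field F] [Algebra K F] {ι : Type}
    (v : ι → F) : ℕ :=
  Module.finrank K (Submodule.span K (Set.range v))

/-- `rk_q` of a matrix: the `K`-dimension of the `K`-span of its columns. -/
noncomputable def rkqMat (K : Type) [Field K] {F : Type} [Field F] [Algebra K F]
    {s : ℕ} {ι : Type} (X : Matrix (Fin s) ι F) : ℕ :=
  Module.finrank K (Submodule.span K (Set.range fun j : ι => fun r : Fin s => X r j))

/-- Sum-rank weight of a blockwise vector. -/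
noncomputable def wtV (K : Type) [Field K] {F : Type} [Field F] [Algebra K F] {ℓ : ℕ}
    (nn : Fin ℓ → ℕ) (x : (Σ i : Fin ℓ, Fin (nn i)) → F) : ℕ :=
  ∑ i, rkq K fun μ : Fin (nn i) => x ⟨i, μ⟩

/-- Sum-rank weight of a blockwise matrix. -/
noncomputable def wtM (K : Type) [Field K] {F : Type} [Field F] [Algebra K F] {s ℓ : ℕ}
    (nn : Fin ℓ → ℕ) (X : Matrix (Fin s) (Σ i : Fin ℓ, Fin (nn i)) F) : ℕ :=
  ∑ i, rkqMat K (Matrix.of fun (r : Fin s) (μ : Fin (nn i)) => X r ⟨i, μ⟩)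

/-- Codeword `C(M) = M · λ_k(β)_a⃗` of the `s`-interleaved linearized Reed–Solomon code. -/
def codeword {F : Type} [Field F] (σ : F ≃+* F) {ℓ : ℕ} (nn : Fin ℓ → ℕ) (aa : Fin ℓ → F)
    (β : (Σ i : Fin ℓ, Fin (nn i)) → F) {s : ℕ} (k : ℕ) (M : Matrix (Fin s) (Fin k) F) :
    Matrix (Fin s) (Σ i : Fin ℓ, Fin (nn i)) F :=
  M * moore σ nn aa k β

/-- A coefficient vector as a finitely supported coefficient sequence. -/
noncomputable def ofVec {F : Type} [Field F] {d : ℕ} (v : Fin d → F) : ℕ →₀ F :=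
  ∑ u : Fin d, Finsupp.single (u : ℕ) (v u)

/-- Generalized operator evaluation `g(b)_a = Σ_u g_u · σ^u(b) · N_u(a)` of a skew
polynomial (finitely supported coefficient sequence). -/
noncomputable def evalOp {F : Type} [Field F] (σ : F ≃+* F) (g : ℕ →₀ F) (a b : F) : F :=
  g.sum fun u c => c * opev σ a b u

/-- Skew product of coefficient sequences: `(g ∗ h)_w = Σ_{u+v=w} g_u · σ^u(h_v)`. -/
noncomputable def skewMulF {F : Type} [Field F] (σ : F ≃+* F) (g h : ℕ →₀ F) : ℕ →₀ F :=
  g.sum fun u cu => h.sum fun v cv => Finsupp.single (u + v) (cu * (⇑σ)^[u] cv)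

section Infra

variable {K F : Type} [Field K] [Field F] [Algebra K F] (σ : F ≃+* F)

lemma genNorm_add (a : F) (u v : ℕ) :
    genNorm σ a (u + v) = (⇑σ)^[u] (genNorm σ a v) * genNorm σ a u := by
  induction v with
  | zero => simp [genNorm]
  | succ v ih =>
      rw [show u + (v+1) = (u+v) + 1 by ring]
      have : (⇑σ)^[u] ((⇑σ)^[v] a * genNorm σ a v) = (⇑σ)^[u] ((⇑σ)^[v] a) * (⇑σ)^[u] (genNorm σ a v) := by
        simpa using iterate_map_mul σ u ((⇑σ)^[v] a) (genNorm σ a v)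
      simp only [genNorm, ih, this, Function.iterate_add_apply]
      ring

lemma opev_zero' (a b : F) : opev σ a b 0 = b := by simp [opev, genNorm]

lemma opev_add_right (a x y : F) (u : ℕ) :
    opev σ a (x + y) u = opev σ a x u + opev σ a y u := by
  simp [opev, map_add, iterate_map_add, add_mul]

lemma opev_zero_right (a : F) (u : ℕ) : opev σ a 0 u = 0 := by
  simp [opev, iterate_map_zero]

variable (hfix : ∀ x : F, σ x = x ↔ x ∈ Set.range (algebraMap K F))

include hfix in
lemma sigma_algebraMap (κ : K) : σ (algebraMap K F κ) = algebraMap K F κ :=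
  (hfix _).mpr ⟨κ, rfl⟩

include hfix in
lemma sigma_iterate_algebraMap (κ : K) (u : ℕ) :
    (⇑σ)^[u] (algebraMap K F κ) = algebraMap K F κ := by
  induction u with
  | zero => rfl
  | succ u ih => rw [Function.iterate_succ_apply', ih, sigma_algebraMap σ hfix]

include hfix in
lemma opev_smul_right (a : F) (κ : K) (x : F) (u : ℕ) :
    opev σ a (κ • x) u = κ • opev σ a x u := by
  simp only [opev, Algebra.smul_def, iterate_map_mul, sigma_iterate_algebraMap σ hfix, mul_assoc]

lemma evalOp_add_right (P : ℕ →₀ F) (a x y : F) :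
    evalOp σ P a (x + y) = evalOp σ P a x + evalOp σ P a y := by
  simp only [evalOp, opev_add_right, mul_add]
  exact Finset.sum_add_distrib

lemma evalOp_zero_right (P : ℕ →₀ F) (a : F) : evalOp σ P a 0 = 0 := by
  simp [evalOp, opev_zero_right, Finsupp.sum]

include hfix in
lemma evalOp_smul_right (P : ℕ →₀ F) (a : F) (κ : K) (x : F) :
    evalOp σ P a (κ • x) = κ • evalOp σ P a x := by
  simp only [evalOp, opev_smul_right σ hfix, Finsupp.sum, Finset.smul_sum]
  congr 1; ext u
  rw [Algebra.smul_def, Algebra.smul_def]; ring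

/-- Generalized operator evaluation as a `K`-linear map in the point. -/
noncomputable def evalLin (hfix : ∀ x : F, σ x = x ↔ x ∈ Set.range (algebraMap K F))
    (P : ℕ →₀ F) (a : F) : F →ₗ[K] F where
  toFun b := evalOp σ P a b
  map_add' x y := evalOp_add_right σ P a x y
  map_smul' κ x := evalOp_smul_right σ hfix P a κ x

@[simp] lemma evalLin_apply (P : ℕ →₀ F) (a b : F) : evalLin σ hfix P a b = evalOp σ P a b := rfl

lemma evalOp_add_left (P Q : ℕ →₀ F) (a b : F) :
    evalOp σ (P + Q) a b = evalOp σ P a b + evalOp σ Q a b := by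
  classical
  apply Finsupp.sum_add_index <;> intros <;> simp [add_mul]

lemma evalOp_single (u : ℕ) (c : F) (a b : F) :
    evalOp σ (Finsupp.single u c) a b = c * opev σ a b u := by
  rw [evalOp, Finsupp.sum_single_index]; simp

lemma evalOp_finsetSum {ι : Type*} (t : Finset ι) (P : ι → ℕ →₀ F) (a b : F) :
    evalOp σ (∑ i ∈ t, P i) a b = ∑ i ∈ t, evalOp σ (P i) a b := by
  classical
  induction t using Finset.induction with
  | empty => simp [evalOp]
  | insert _ _ h ih => rw [Finset.sum_insert h, Finset.sum_insert h, evalOp_add_left, ih]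

end Infra

section Infra2

variable {K F : Type} [Field K] [Field F] [Algebra K F] (σ : F ≃+* F)

lemma opev_finsetSum {ι : Type*} (t : Finset ι) (x : ι → F) (a : F) (u : ℕ) :
    opev σ a (∑ j ∈ t, x j) u = ∑ j ∈ t, opev σ a (x j) u := by
  classical
  induction t using Finset.induction with
  | empty => simp [opev_zero_right]
  | insert _ _ h ih => rw [Finset.sum_insert h, Finset.sum_insert h, opev_add_right, ih]

lemma evalOp_skewMulF (g h : ℕ →₀ F) (a b : F) :
    evalOp σ (skewMulF σ g h) a b = evalOp σ g a (evalOp σ h a b) := by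
  classical
  rw [skewMulF, Finsupp.sum, evalOp_finsetSum]
  conv_rhs => rw [evalOp, Finsupp.sum]
  apply Finset.sum_congr rfl
  intro u _
  rw [Finsupp.sum, evalOp_finsetSum]
  conv_rhs => rw [evalOp, Finsupp.sum, opev_finsetSum, Finset.mul_sum]
  apply Finset.sum_congr rfl
  intro v _
  rw [evalOp_single]
  simp only [opev, iterate_map_mul, genNorm_add, Function.iterate_add_apply]
  ring

lemma evalOp_ofVec {d : ℕ} (v : Fin d → F) (a b : F) :
    evalOp σ (ofVec v) a b = ∑ u : Fin d, v u * opev σ a b (u : ℕ) := by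
  rw [ofVec, evalOp_finsetSum]
  exact Finset.sum_congr rfl fun u _ => evalOp_single σ _ _ a b

lemma ofVec_apply_eq_zero {d : ℕ} (v : Fin d → F) {w : ℕ} (hw : d ≤ w) :
    ofVec v w = 0 := by
  classical
  rw [ofVec, Finset.sum_apply']
  apply Finset.sum_eq_zero
  intro u _
  rw [Finsupp.single_apply, if_neg (by omega)]

lemma skewMulF_apply_eq_zero (g h : ℕ →₀ F) (dg dh : ℕ)
    (hg : ∀ u, g u ≠ 0 → u ≤ dg) (hh : ∀ v, h v ≠ 0 → v ≤ dh)
    {w : ℕ} (hw : dg + dh < w) : skewMulF σ g h w = 0 := by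
  classical
  rw [skewMulF, Finsupp.sum_apply, Finsupp.sum]
  apply Finset.sum_eq_zero
  intro u hu
  rw [Finsupp.sum_apply, Finsupp.sum]
  apply Finset.sum_eq_zero
  intro v hv
  have h1 : u ≤ dg := hg u (Finsupp.mem_support_iff.mp hu)
  have h2 : v ≤ dh := hh v (Finsupp.mem_support_iff.mp hv)
  rw [Finsupp.single_apply, if_neg (by omega)]

lemma skewMulF_zero_left (h : ℕ →₀ F) : skewMulF σ 0 h = 0 := by
  simp [skewMulF]

end Infra2

section Division

variable {K F : Type} [Field K] [Field F] [Algebra K F] (σ : F ≃+* F)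

/-- Quotient coefficients for right division by `X - γ`. -/
noncomputable def quotAux (P : ℕ →₀ F) (d : ℕ) (γ : F) (j : ℕ) : F :=
  ∑ w ∈ Finset.Ioc j (d+1), P w * ∏ u ∈ Finset.Ico (j+1) w, (⇑σ)^[u] γ

lemma quotAux_eq_zero (P : ℕ →₀ F) (d : ℕ) (γ : F) {j : ℕ} (hj : d + 1 ≤ j) :
    quotAux σ P d γ j = 0 := by
  rw [quotAux, Finset.Ioc_eq_empty (by omega), Finset.sum_empty]

lemma quotAux_rec (P : ℕ →₀ F) (d : ℕ) (γ : F) (hP : ∀ u, P u ≠ 0 → u ≤ d + 1) (j : ℕ) :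
    quotAux σ P d γ j = P (j+1) + quotAux σ P d γ (j+1) * (⇑σ)^[j+1] γ := by
  by_cases hj : j < d + 1
  · have hmem : j + 1 ∈ Finset.Ioc j (d+1) := by simp; omega
    rw [quotAux, ← Finset.add_sum_erase _ _ hmem]
    have herase : (Finset.Ioc j (d+1)).erase (j+1) = Finset.Ioc (j+1) (d+1) := by
      ext w; simp [Finset.mem_erase, Finset.mem_Ioc]; omega
    rw [herase]
    congr 1
    · simp
    · rw [quotAux, Finset.sum_mul]
      apply Finset.sum_congr rfl
      intro w hw
      rw [Finset.mem_Ioc] at hw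
      rw [Finset.prod_eq_prod_Ico_succ_bot (by omega : j + 1 < w)]
      ring
  · have h1 : P (j+1) = 0 := by
      by_contra h; exact absurd (hP _ h) (by omega)
    rw [quotAux_eq_zero σ P d γ (by omega), quotAux_eq_zero σ P d γ (by omega), h1]
    ring

/-- The quotient as a finsupp. -/
noncomputable def quotF (P : ℕ →₀ F) (d : ℕ) (γ : F) : ℕ →₀ F :=
  Finsupp.onFinset (Finset.range (d+1)) (quotAux σ P d γ)
    (fun j hj => by
      rw [Finset.mem_range]
      by_contra h
      exact hj (quotAux_eq_zero σ P d γ (by omega)))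

lemma quotF_apply (P : ℕ →₀ F) (d : ℕ) (γ : F) (j : ℕ) :
    quotF σ P d γ j = quotAux σ P d γ j := rfl

lemma quotF_support (P : ℕ →₀ F) (d : ℕ) (γ : F) :
    ∀ u, quotF σ P d γ u ≠ 0 → u ≤ d := by
  intro u hu
  by_contra h
  exact hu (by rw [quotF_apply, quotAux_eq_zero σ P d γ (by omega)])

lemma skewMulF_m_apply (g : ℕ →₀ F) (γ : F) (w : ℕ) :
    skewMulF σ g (Finsupp.single 1 1 + Finsupp.single 0 (-γ)) w
      = (match w with | 0 => 0 | j+1 => g j) - g w * (⇑σ)^[w] γ := by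
  classical
  have hinner : ∀ u : ℕ, ∀ cu : F,
      ((Finsupp.single 1 (1:F) + Finsupp.single 0 (-γ)).sum
        fun v cv => Finsupp.single (u + v) (cu * (⇑σ)^[u] cv))
      = Finsupp.single (u+1) cu + Finsupp.single u (-(cu * (⇑σ)^[u] γ)) := by
    intro u cu
    rw [Finsupp.sum_add_index' (by intro v; simp [iterate_map_zero])
      (by intro v x y; rw [iterate_map_add]; rw [mul_add, Finsupp.single_add])]
    rw [Finsupp.sum_single_index (by simp [iterate_map_zero]),
        Finsupp.sum_single_index (by simp [iterate_map_zero])]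
    simp [iterate_map_one, iterate_map_neg]
  rw [skewMulF, Finsupp.sum_apply, Finsupp.sum]
  simp only [hinner, Finsupp.add_apply]
  rw [Finset.sum_add_distrib]
  have hA : (∑ x ∈ g.support, (Finsupp.single (x+1) (g x)) w)
      = (match w with | 0 => 0 | j+1 => g j) := by
    cases w with
    | zero =>
        apply Finset.sum_eq_zero
        intro u _
        rw [Finsupp.single_apply, if_neg (by omega)]
    | succ j =>
        have : ∀ x ∈ g.support, (Finsupp.single (x+1) (g x)) (j+1)
            = if x = j then g x else 0 := by
          intro x _
          rw [Finsupp.single_apply]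
          by_cases hx : x = j
          · rw [if_pos (by omega), if_pos hx]
          · rw [if_neg (by omega), if_neg hx]
        rw [Finset.sum_congr rfl this, Finset.sum_ite_eq' g.support j (fun u => g u)]
        by_cases hj : j ∈ g.support
        · rw [if_pos hj]
        · rw [if_neg hj]
          exact (Finsupp.notMem_support_iff.mp hj).symm
  have hB : (∑ x ∈ g.support, (Finsupp.single x (-(g x * (⇑σ)^[x] γ))) w)
      = -(g w * (⇑σ)^[w] γ) := by
    rw [Finset.sum_congr rfl (fun u _ => (Finsupp.single_apply :
      (Finsupp.single u (-(g u * (⇑σ)^[u] γ))) w = _)),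
      Finset.sum_ite_eq' g.support w]
    by_cases hw : w ∈ g.support
    · rw [if_pos hw]
    · rw [if_neg hw, Finsupp.notMem_support_iff.mp hw]; ring
  rw [hA, hB]
  ring

/-- Right division of `P` by the monic linear skew polynomial `X - γ`. -/
lemma skew_division (P : ℕ →₀ F) (d : ℕ) (hP : ∀ u, P u ≠ 0 → u ≤ d + 1) (γ : F) :
    ∃ g : ℕ →₀ F, (∀ u, g u ≠ 0 → u ≤ d) ∧
      P = skewMulF σ g (Finsupp.single 1 1 + Finsupp.single 0 (-γ))
          + Finsupp.single 0 (P 0 + g 0 * γ) := by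
  refine ⟨quotF σ P d γ, quotF_support σ P d γ, ?_⟩
  ext w
  rw [Finsupp.add_apply, skewMulF_m_apply]
  cases w with
  | zero => simp [quotF_apply]
  | succ j =>
      rw [Finsupp.single_apply, if_neg (by omega)]
      have := quotAux_rec σ P d γ hP j
      simp only [quotF_apply]
      rw [this]
      ring

end Division

section MainLemma

variable {K F : Type} [Field K] [Field F] [Algebra K F] (σ : F ≃+* F)
variable (hfix : ∀ x : F, σ x = x ↔ x ∈ Set.range (algebraMap K F))

/-- `b' ↦ σ(b')·a − γ·b'` as a `K`-linear map. -/
noncomputable def mLin (a γ : F) : F →ₗ[K] F where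
  toFun b := σ b * a - γ * b
  map_add' x y := by simp only [map_add]; ring
  map_smul' κ x := by
    simp only [Algebra.smul_def, RingHom.id_apply, map_mul, sigma_algebraMap σ hfix]
    ring

@[simp] lemma mLin_apply (a γ b : F) : mLin σ hfix a γ b = σ b * a - γ * b := rfl

lemma evalOp_m (a γ b : F) :
    evalOp σ (Finsupp.single 1 1 + Finsupp.single 0 (-γ)) a b = σ b * a - γ * b := by
  rw [evalOp_add_left, evalOp_single, evalOp_single, opev_zero']
  show 1 * ((⇑σ)^[1] b * genNorm σ a 1) + -γ * b = _
  rw [show genNorm σ a 1 = (⇑σ)^[0] a * genNorm σ a 0 from rfl]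
  simp only [genNorm, Function.iterate_one, Function.iterate_zero, id_eq, mul_one, one_mul]
  ring

lemma sconj_of_eq {a a' b x : F} (hb : b ≠ 0) (hx : x ≠ 0)
    (h : σ x * a' = (σ b * a * b⁻¹) * x) : SConj σ a a' := by
  have hσx : σ x ≠ 0 := fun h0 => hx (σ.injective (h0.trans (map_zero σ).symm))
  refine ⟨b * x⁻¹, mul_ne_zero hb (inv_ne_zero hx), ?_⟩
  rw [map_mul, map_inv₀, mul_inv, inv_inv]
  calc a' = (σ x)⁻¹ * (σ x * a') := by rw [inv_mul_cancel_left₀ hσx]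
    _ = (σ x)⁻¹ * (σ b * a * b⁻¹ * x) := by rw [h]
    _ = σ b * (σ x)⁻¹ * a * (b⁻¹ * x) := by ring

include hfix in
lemma zero_space_bound [FiniteDimensional K F] :
    ∀ (d : ℕ) (P : ℕ →₀ F), (∀ u, P u ≠ 0 → u ≤ d) → P ≠ 0 →
    ∀ {ℓ : ℕ} (a : Fin ℓ → F), (∀ i, a i ≠ 0) →
    (∀ i j, i ≠ j → ¬ SConj σ (a i) (a j)) →
    ∀ (V : Fin ℓ → Submodule K F), (∀ i, ∀ b ∈ V i, evalOp σ P (a i) b = 0) →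
    ∑ i, Module.finrank K (V i) ≤ d := by
  intro d
  induction d with
  | zero =>
      intro P hP hP0 ℓ a _ _ V hV
      have hP0' : P 0 ≠ 0 := by
        intro h
        apply hP0
        ext u
        rcases Nat.eq_zero_or_pos u with rfl | hu
        · exact h
        · by_contra hPu
          have := hP u hPu
          omega
      have hVbot : ∀ i, V i = ⊥ := by
        intro i
        rw [Submodule.eq_bot_iff]
        intro b hb
        by_contra hb0
        have heval := hV i b hb
        have hsupp : P.support ⊆ ({0} : Finset ℕ) := by
          intro u hu
          have := hP u (Finsupp.mem_support_iff.mp hu)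
          simp only [Finset.mem_singleton]
          omega
        rw [evalOp, Finsupp.sum_of_support_subset P hsupp _ (by intro j _; simp),
          Finset.sum_singleton, opev_zero'] at heval
        rcases mul_eq_zero.mp heval with h | h
        · exact hP0' h
        · exact hb0 h
      simp [hVbot]
  | succ d ih =>
      intro P hP hP0 ℓ a ha hconj V hV
      by_cases hall : ∀ i, V i = ⊥
      · have hz : ∀ i, Module.finrank K (V i) = 0 := by
          intro i; rw [hall i]; exact finrank_bot K F
        rw [Finset.sum_eq_zero (fun i _ => hz i)]
        omega
      · push_neg at hall
        obtain ⟨i0, hi0⟩ := hall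
        obtain ⟨b, hbV, hb0⟩ := Submodule.ne_bot_iff _ |>.mp hi0
        set γ : F := σ b * a i0 * b⁻¹ with hγ
        obtain ⟨g, hgdeg, hgP⟩ := skew_division σ P d hP γ
        -- the remainder vanishes
        have hPb := hV i0 b hbV
        rw [hgP, evalOp_add_left, evalOp_skewMulF, evalOp_m] at hPb
        have hzero : σ b * a i0 - γ * b = 0 := by
          rw [hγ]; field_simp; simp
        rw [hzero, evalOp_zero_right, evalOp_single, zero_add, opev_zero'] at hPb
        have hr : P 0 + g 0 * γ = 0 := by
          rcases mul_eq_zero.mp hPb with h | h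
          · exact h
          · exact absurd h hb0
        rw [hr, Finsupp.single_zero, add_zero] at hgP
        have hg0 : g ≠ 0 := by
          rintro rfl
          rw [skewMulF_zero_left] at hgP
          exact hP0 hgP
        set f : Fin ℓ → F →ₗ[K] F := fun i => mLin σ hfix (a i) γ with hf
        set V' : Fin ℓ → Submodule K F := fun i => (V i).map (f i) with hV'def
        have hV' : ∀ i, ∀ b'' ∈ V' i, evalOp σ g (a i) b'' = 0 := by
          rintro i b'' hb''
          obtain ⟨b', hb', rfl⟩ := hb''
          have hPb' := hV i b' hb'
          rw [hgP, evalOp_skewMulF, evalOp_m] at hPb'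
          exact hPb'
        have hsum' := ih g hgdeg hg0 a ha hconj V' hV'
        have key : ∀ i, Module.finrank K (V i)
            ≤ Module.finrank K (V' i) + (if i = i0 then 1 else 0) := by
          intro i
          have hrn := LinearMap.finrank_range_add_finrank_ker ((f i).domRestrict (V i))
          rw [LinearMap.range_domRestrict] at hrn
          have hker : Module.finrank K (LinearMap.ker ((f i).domRestrict (V i)))
              ≤ (if i = i0 then 1 else 0) := by
            by_cases hi : i = i0
            · subst hi
              rw [if_pos rfl]
              have hbne : (⟨b, hbV⟩ : V i) ≠ 0 :=
                fun h => hb0 (congrArg Subtype.val h)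
              have hle : LinearMap.ker ((f i).domRestrict (V i))
                  ≤ Submodule.span K {(⟨b, hbV⟩ : V i)} := by
                rintro ⟨x, hxV⟩ hx
                rw [LinearMap.mem_ker, LinearMap.domRestrict_apply] at hx
                have hfx : σ x * a i - γ * x = 0 := hx
                rcases eq_or_ne x 0 with rfl | hx0
                · exact Submodule.zero_mem _
                · have hσx : σ x ≠ 0 :=
                    fun h0 => hx0 (σ.injective (h0.trans (map_zero σ).symm))
                  have hxeq : σ x * a i = γ * x := by linear_combination hfx
                  have h2 : σ x * b * a i = σ b * x * a i := by
                    rw [hγ] at hxeq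
                    linear_combination b * hxeq + σ b * a i * x * (inv_mul_cancel₀ hb0)
                  have h3 : σ x * b = σ b * x := mul_right_cancel₀ (ha i) h2
                  have hc : σ (b * x⁻¹) = b * x⁻¹ := by
                    rw [map_mul, map_inv₀]
                    field_simp
                    linear_combination -h3
                  obtain ⟨κ, hκ⟩ := (hfix _).mp hc
                  have hcne : b * x⁻¹ ≠ 0 := mul_ne_zero hb0 (inv_ne_zero hx0)
                  have hκ0 : κ ≠ 0 := by
                    rintro rfl
                    rw [map_zero] at hκ
                    exact hcne hκ.symm
                  have hsm : κ • x = b := by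
                    rw [Algebra.smul_def, hκ]
                    field_simp
                  rw [Submodule.mem_span_singleton]
                  refine ⟨κ⁻¹, Subtype.ext ?_⟩
                  show κ⁻¹ • b = x
                  rw [← hsm, inv_smul_smul₀ hκ0]
              calc Module.finrank K (LinearMap.ker ((f i).domRestrict (V i)))
                  ≤ Module.finrank K (Submodule.span K {(⟨b, hbV⟩ : V i)}) :=
                    Submodule.finrank_mono hle
                _ = 1 := finrank_span_singleton hbne
            · rw [if_neg hi]
              have hkerbot : LinearMap.ker ((f i).domRestrict (V i)) = ⊥ := by
                rw [Submodule.eq_bot_iff]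
                rintro ⟨x, hxV⟩ hx
                rw [LinearMap.mem_ker, LinearMap.domRestrict_apply] at hx
                have hfx : σ x * a i - γ * x = 0 := hx
                rcases eq_or_ne x 0 with rfl | hx0
                · rfl
                · exfalso
                  have hxeq : σ x * a i = (σ b * a i0 * b⁻¹) * x := by
                    rw [← hγ]; linear_combination hfx
                  exact hconj i0 i (fun h => hi h.symm) (sconj_of_eq σ hb0 hx0 hxeq)
              rw [hkerbot]
              simp
          have hrn' : Module.finrank K (V' i)
              = Module.finrank K (Submodule.map (f i) (V i)) := rfl
          omega
        calc ∑ i, Module.finrank K (V i)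
            ≤ ∑ i, (Module.finrank K (V' i) + (if i = i0 then 1 else 0)) :=
              Finset.sum_le_sum (fun i _ => key i)
          _ = (∑ i, Module.finrank K (V' i)) + ∑ i, (if i = i0 then 1 else 0) :=
              Finset.sum_add_distrib
          _ ≤ d + 1 := by
              rw [Finset.sum_ite_eq' Finset.univ i0 (fun _ => 1), if_pos (Finset.mem_univ i0)]
              omega

end MainLemma

set_option maxHeartbeats 2000000

/-- Decoding radius: `P = 0`.
If `R = C(M) + E` with `(s+1)·wt_ΣR(E) < s·(n−k+1)`,
`D = ⌈(n + s(k−1) + 1)/(s+1)⌉`, and `(Q_0, Q_1, …, Q_s)` is a nonzero degree-restricted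
tuple satisfying the interpolation conditions for `R`, then
`P = Q_0 + Σ_l Q_l ∗ f^(l)` is identically zero (`f^(l)` the `l`-th row of `M`). -/
theorem P_eq_zero
    {K F : Type} [Field K] [Field F] [Algebra K F] [Fintype K] [Fintype F]
    (σ : F ≃+* F)
    (hfix : ∀ x : F, σ x = x ↔ x ∈ Set.range (algebraMap K F))
    {ℓ : ℕ} (hℓ : 1 ≤ ℓ) (nn : Fin ℓ → ℕ) (aa : Fin ℓ → F)
    (ha0 : ∀ i, aa i ≠ 0)
    (haconj : ∀ i j : Fin ℓ, i ≠ j → ¬ SConj σ (aa i) (aa j))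
    (β : (Σ i : Fin ℓ, Fin (nn i)) → F)
    (hβ : ∀ i, LinearIndependent K fun μ : Fin (nn i) => β ⟨i, μ⟩)
    {s : ℕ} (hs : 1 ≤ s) {k n t : ℕ} (hn : n = ∑ i, nn i)
    (hk : 1 ≤ k) (hkn : k ≤ n)
    (M : Matrix (Fin s) (Fin k) F)
    (E R : Matrix (Fin s) (Σ i : Fin ℓ, Fin (nn i)) F)
    (hR : R = codeword σ nn aa β k M + E)
    (ht : wtM K nn E = t)
    (hdec : (s + 1) * t < s * (n - k + 1))
    {D : ℕ} (hD : D = (n + s * (k - 1) + 1 + s) / (s + 1))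
    (Q0 : Fin D → F) (Q : Fin s → Fin (D - k + 1) → F)
    (hnz : ¬ (Q0 = 0 ∧ ∀ l : Fin s, Q l = 0))
    (hint : ∀ p : Σ i : Fin ℓ, Fin (nn i),
      evalOp σ (ofVec Q0) (aa p.1) (β p)
        + ∑ l : Fin s, evalOp σ (ofVec (Q l)) (aa p.1) (R l p) = 0) :
    ofVec Q0 + ∑ l : Fin s, skewMulF σ (ofVec (Q l)) (ofVec (M l)) = 0 := by
  classical
  have hfd : FiniteDimensional K F := Module.Finite.of_finite
  by_contra hne
  have hs1 : 0 < s + 1 := by omega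
  have hkD : k ≤ D := by
    rw [hD, Nat.le_div_iff_mul_le hs1]
    have e : k * (s+1) = k + (s*(k-1) + s) := by
      obtain ⟨k', rfl⟩ : ∃ k', k = k' + 1 := ⟨k-1, by omega⟩
      simp only [Nat.succ_sub_one]
      ring
    rw [e]
    generalize s*(k-1) = A
    omega
  have hD1 : 1 ≤ D := le_trans hk hkD
  set P : ℕ →₀ F := ofVec Q0 + ∑ l, skewMulF σ (ofVec (Q l)) (ofVec (M l)) with hPdef
  have hPdeg : ∀ u, P u ≠ 0 → u ≤ D - 1 := by
    intro u hu
    by_contra hcon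
    push_neg at hcon
    apply hu
    rw [hPdef, Finsupp.add_apply]
    have h1 : ofVec Q0 u = 0 := ofVec_apply_eq_zero Q0 (by omega)
    have h2 : (∑ l, skewMulF σ (ofVec (Q l)) (ofVec (M l))) u = 0 := by
      rw [Finset.sum_apply']
      apply Finset.sum_eq_zero
      intro l _
      apply skewMulF_apply_eq_zero σ _ _ (D - k) (k - 1) _ _ (by omega)
      · intro v hv
        by_contra hvv
        push_neg at hvv
        exact hv (ofVec_apply_eq_zero _ (by omega))
      · intro v hv
        by_contra hvv
        push_neg at hvv
        exact hv (ofVec_apply_eq_zero _ (by omega))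
    rw [h1, h2, add_zero]
  have hPE : ∀ p : Σ i : Fin ℓ, Fin (nn i), evalOp σ P (aa p.1) (β p)
      = - ∑ l, evalOp σ (ofVec (Q l)) (aa p.1) (E l p) := by
    intro p
    have h0 := hint p
    rw [hR] at h0
    have hcw : ∀ l, (codeword σ nn aa β k M + E) l p
        = evalOp σ (ofVec (M l)) (aa p.1) (β p) + E l p := by
      intro l
      rw [Matrix.add_apply]
      congr 1
      rw [codeword, Matrix.mul_apply, evalOp_ofVec]
      rfl
    simp only [hcw, evalOp_add_right] at h0
    rw [Finset.sum_add_distrib] at h0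
    have hPev : evalOp σ P (aa p.1) (β p) = evalOp σ (ofVec Q0) (aa p.1) (β p)
        + ∑ l, evalOp σ (ofVec (Q l)) (aa p.1) (evalOp σ (ofVec (M l)) (aa p.1) (β p)) := by
      rw [hPdef, evalOp_add_left, evalOp_finsetSum]
      congr 1
      exact Finset.sum_congr rfl fun l _ => evalOp_skewMulF σ _ _ _ _
    rw [hPev]
    linear_combination h0
  set tt : Fin ℓ → ℕ :=
    fun i => rkqMat K (Matrix.of fun (r : Fin s) (μ : Fin (nn i)) => E r ⟨i, μ⟩) with htt
  have main : ∀ i : Fin ℓ, ∃ Vi : Submodule K F,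
      Module.finrank K Vi + tt i = nn i ∧ ∀ b ∈ Vi, evalOp σ P (aa i) b = 0 := by
    intro i
    set cols : Fin (nn i) → (Fin s → F) := fun μ => fun r => E r ⟨i, μ⟩ with hcols
    set ψ : (Fin (nn i) → K) →ₗ[K] (Fin s → F) := Fintype.linearCombination K cols with hψ
    set φ : (Fin (nn i) → K) →ₗ[K] F :=
      Fintype.linearCombination K (fun μ => β ⟨i, μ⟩) with hφ
    refine ⟨(LinearMap.ker ψ).map φ, ?_, ?_⟩
    · have hrψ : Module.finrank K (LinearMap.range ψ) = tt i := by
        rw [hψ, Fintype.range_linearCombination]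
        rfl
      have hrn := LinearMap.finrank_range_add_finrank_ker ψ
      rw [Module.finrank_pi, Fintype.card_fin] at hrn
      have hφinj : LinearMap.ker φ = ⊥ := by
        rw [Submodule.eq_bot_iff]
        intro x hx
        rw [LinearMap.mem_ker, hφ, Fintype.linearCombination_apply] at hx
        funext μ
        exact Fintype.linearIndependent_iff.mp (hβ i) x hx μ
      have hrn2 := LinearMap.finrank_range_add_finrank_ker (φ.domRestrict (LinearMap.ker ψ))
      rw [LinearMap.range_domRestrict] at hrn2
      have hker2 : LinearMap.ker (φ.domRestrict (LinearMap.ker ψ)) = ⊥ := by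
        rw [Submodule.eq_bot_iff]
        rintro ⟨x, hxk⟩ hx
        rw [LinearMap.mem_ker, LinearMap.domRestrict_apply] at hx
        have hx0 : x ∈ LinearMap.ker φ := LinearMap.mem_ker.mpr hx
        rw [hφinj, Submodule.mem_bot] at hx0
        exact Subtype.ext hx0
      rw [hker2] at hrn2
      simp only [finrank_bot, add_zero] at hrn2
      omega
    · rintro b ⟨x, hxk, rfl⟩
      have hxk0 : ψ x = 0 := hxk
      rw [hφ, Fintype.linearCombination_apply]
      rw [show evalOp σ P (aa i) (∑ μ, x μ • β ⟨i, μ⟩)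
          = ∑ μ, x μ • evalOp σ P (aa i) (β ⟨i, μ⟩) from by
        rw [← evalLin_apply σ hfix, map_sum]
        simp only [map_smul, evalLin_apply]]
      have hstep : ∀ μ : Fin (nn i), evalOp σ P (aa i) (β ⟨i, μ⟩)
          = - ∑ l, evalOp σ (ofVec (Q l)) (aa i) (E l ⟨i, μ⟩) := fun μ => hPE ⟨i, μ⟩
      simp only [hstep, smul_neg, Finset.smul_sum]
      have hswap : ∀ μ : Fin (nn i),
          -(∑ l, x μ • evalOp σ (ofVec (Q l)) (aa i) (E l ⟨i, μ⟩))
          = ∑ l, -(x μ • evalOp σ (ofVec (Q l)) (aa i) (E l ⟨i, μ⟩)) :=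
        fun μ => (Finset.sum_neg_distrib _).symm
      simp only [hswap]
      rw [Finset.sum_comm]
      apply Finset.sum_eq_zero
      intro l _
      rw [Finset.sum_neg_distrib]
      have hcol : ∑ μ, x μ • evalOp σ (ofVec (Q l)) (aa i) (E l ⟨i, μ⟩)
          = evalOp σ (ofVec (Q l)) (aa i) (∑ μ, x μ • E l ⟨i, μ⟩) := by
        rw [← evalLin_apply σ hfix, map_sum]
        simp only [map_smul, evalLin_apply]
      rw [hcol]
      have hψx : ∑ μ, x μ • E l ⟨i, μ⟩ = 0 := by
        have h3 : Fintype.linearCombination K cols x = 0 := hxk0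
        rw [Fintype.linearCombination_apply] at h3
        have h2 := congrFun h3 l
        simpa [hcols] using h2
      rw [hψx, evalOp_zero_right, neg_zero]
  choose V hVrank hVzero using main
  have hbound := zero_space_bound σ hfix (D - 1) P hPdeg hne aa ha0 haconj V hVzero
  have htE : (∑ i, tt i) = t := by rw [← ht, wtM]
  have hsumV : (∑ i, Module.finrank K (V i)) + t = n := by
    have h : ∑ i, (Module.finrank K (V i) + tt i) = ∑ i, nn i :=
      Finset.sum_congr rfl fun i _ => hVrank i
    rw [Finset.sum_add_distrib, htE, ← hn] at h
    exact h
  have h1 : (s+1) * D ≤ n + s*(k-1) + 1 + s := by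
    rw [hD, mul_comm]
    exact Nat.div_mul_le_self _ _
  obtain ⟨k', hk'⟩ : ∃ k', k = k' + 1 := ⟨k - 1, by omega⟩
  obtain ⟨m, hm⟩ : ∃ m, n = k' + m := ⟨n - k', by omega⟩
  have hx1 : s*(k-1) = s*k' := by rw [hk']; simp
  have hx2 : n - k + 1 = m := by omega
  rw [hx1] at h1
  rw [hx2] at hdec
  have hAB : s*k' + s*m = s*n := by rw [hm, ← Nat.mul_add]
  rcases le_or_gt (D + t) n with hDt | hDt
  · omega
  · have hmono : (s+1)*(n+1) ≤ (s+1)*(D+t) := Nat.mul_le_mul_left _ (by omega)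
    have e1 : (s+1)*(D+t) = (s+1)*D + (s+1)*t := by ring
    have e2 : (s+1)*(n+1) = s*n + n + s + 1 := by ring
    generalize hA1 : s*k' = A1 at h1 hAB
    generalize hA2 : s*m = A2 at hdec hAB
    generalize hA3 : s*n = A3 at hAB e2
    generalize hA4 : (s+1)*D = A4 at h1 e1
    generalize hA5 : (s+1)*t = A5 at hdec e1
    generalize hA6 : (s+1)*(D+t) = A6 at e1 hmono
    generalize hA7 : (s+1)*(n+1) = A7 at e2 hmono
    omega

end Stmt13
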